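/- Let $\alpha>-2$ and $\epsilon>0$, and let $U_{\epsilon,\alpha}(x)=\frac{(3+\alpha)^{1/(4+2\alpha)}\,\epsilon^{1/2}}{(\epsilon^{2+\alpha}+|x|^{2+\alpha})^{1/(2+\alpha)}}$ for $x\in\mathbb{R}^3$. Then $U_{\epsilon,\alpha}$ is positive, twice continuously differentiable on $\mathbb{R}^3\setminus\{0\}$, and satisfies pointwise, for every $x\in\mathbb{R}^3\setminus\{0\}$, $-\Delta U_{\epsilon,\alpha}(x) \;=\; |x|^{\alpha}\, U_{\epsilon,\alpha}(x)^{5+2\alpha},$ where $\Delta$ denotes the Laplacian on $\mathbb{R}^3$ (the sum of the second partial derivatives). -/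

import Mathlib

open MeasureTheory Real

/-- `ℝ³` as a Euclidean space. -/
abbrev E3 := EuclideanSpace ℝ (Fin 3)

/-- The Laplacian on `ℝ³`: the sum of the second partial derivatives in the coordinate
directions. -/
noncomputable def lap (u : E3 → ℝ) (x : E3) : ℝ :=
  ∑ i : Fin 3,
    fderiv ℝ (fun y => fderiv ℝ u y (EuclideanSpace.single i (1 : ℝ))) x
      (EuclideanSpace.single i (1 : ℝ))


noncomputable def phi0 (K p ε s : ℝ) : ℝ := K * (ε^p + s^(p/2))^(-(1/p))
noncomputable def phi1 (K p ε s : ℝ) : ℝ := -(K/2) * s^(p/2-1) * (ε^p + s^(p/2))^(-(1/p)-1)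
noncomputable def phi2 (K p ε s : ℝ) : ℝ :=
  -(K/2) * ((p/2-1) * s^(p/2-2) * (ε^p + s^(p/2))^(-(1/p)-1)
    + s^(p/2-1) * ((-(1/p)-1) * (ε^p + s^(p/2))^(-(1/p)-2) * ((p/2) * s^(p/2-1))))

lemma wpos {p ε : ℝ} (hε : 0 < ε) (s : ℝ) (hs : 0 ≤ s) : 0 < ε^p + s^(p/2) :=
  add_pos_of_pos_of_nonneg (Real.rpow_pos_of_pos hε _) (Real.rpow_nonneg hs _)

lemma hasDerivAt_w {p ε : ℝ} {s : ℝ} (hs : 0 < s) :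
    HasDerivAt (fun t : ℝ => ε^p + t^(p/2)) ((p/2) * s^(p/2-1)) s :=
  (Real.hasDerivAt_rpow_const (Or.inl hs.ne')).const_add _

lemma hasDerivAt_phi0 {K p ε : ℝ} (hε : 0 < ε) (hp : 0 < p) {s : ℝ} (hs : 0 < s) :
    HasDerivAt (phi0 K p ε) (phi1 K p ε s) s := by
  have hw : 0 < ε^p + s^(p/2) := wpos hε s hs.le
  have h2 : HasDerivAt (fun u : ℝ => u ^ (-(1/p)))
      ((-(1/p)) * (ε^p + s^(p/2))^(-(1/p)-1)) (ε^p + s^(p/2)) :=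
    Real.hasDerivAt_rpow_const (Or.inl hw.ne')
  have h := (h2.comp s (hasDerivAt_w hs)).const_mul K
  rw [show phi1 K p ε s = K * (-(1 / p) * (ε ^ p + s ^ (p / 2)) ^ (-(1 / p) - 1)
      * (p / 2 * s ^ (p / 2 - 1))) from ?_]
  · exact h
  unfold phi1
  field_simp

lemma hasDerivAt_phi1 {K p ε : ℝ} (hε : 0 < ε) {s : ℝ} (hs : 0 < s) :
    HasDerivAt (phi1 K p ε) (phi2 K p ε s) s := by
  have hw : 0 < ε^p + s^(p/2) := wpos hε s hs.le
  have ha : HasDerivAt (fun t : ℝ => t^(p/2-1)) ((p/2-1) * s^(p/2-2)) s := by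
    have := Real.hasDerivAt_rpow_const (x := s) (p := p/2-1) (Or.inl hs.ne')
    simpa [show p/2-1-1 = p/2-2 by ring] using this
  have hb : HasDerivAt (fun t : ℝ => (ε^p + t^(p/2))^(-(1/p)-1))
      (((-(1/p)-1) * (ε^p + s^(p/2))^(-(1/p)-1-1)) * ((p/2) * s^(p/2-1))) s := by
    have h2 : HasDerivAt (fun u : ℝ => u ^ (-(1/p)-1))
        ((-(1/p)-1) * (ε^p + s^(p/2))^(-(1/p)-1-1)) (ε^p + s^(p/2)) :=
      Real.hasDerivAt_rpow_const (Or.inl hw.ne')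
    exact h2.comp s (hasDerivAt_w hs)
  have h := (ha.mul hb).const_mul (-(K/2))
  have hfn : phi1 K p ε = (fun t : ℝ =>
      -(K/2) * (t^(p/2-1) * (ε^p + t^(p/2))^(-(1/p)-1))) := by
    funext t; unfold phi1; ring
  rw [hfn]
  have hd : phi2 K p ε s = -(K/2) * ((p/2-1) * s^(p/2-2) * (ε^p + s^(p/2))^(-(1/p)-1)
      + s^(p/2-1) * (((-(1/p)-1) * (ε^p + s^(p/2))^(-(1/p)-1-1)) * ((p/2) * s^(p/2-1)))) := by
    unfold phi2
    rw [show -(1/p)-1-1 = -(1/p)-2 by ring]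
  rw [hd]
  exact h


lemma keyalg {K p ε : ℝ} (hε : 0 < ε) (hp : 0 < p)
    (hK : K = (p+1) ^ (1/(2*p)) * ε ^ ((1:ℝ)/2)) {s : ℝ} (hs : 0 < s) :
    -(4 * s * phi2 K p ε s + 6 * phi1 K p ε s)
      = s^((p-2)/2) * (phi0 K p ε s)^(2*p+1) := by
  have hw : 0 < ε^p + s^(p/2) := wpos hε s hs.le
  have hp1 : (0:ℝ) < p + 1 := by linarith
  have hKpos : 0 ≤ K := by
    rw [hK]; positivity
  have eR : (phi0 K p ε s)^(2*p+1)
      = (p+1) * ((p+1)^(1/(2*p)) * (ε^p * ε^((1:ℝ)/2))) * (ε^p + s^(p/2))^(-(1/p)-2) := by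
    unfold phi0
    rw [Real.mul_rpow hKpos (Real.rpow_nonneg hw.le _), ← Real.rpow_mul hw.le]
    rw [show (-(1/p))*(2*p+1) = -(1/p)-2 by field_simp; ring]
    rw [hK, Real.mul_rpow (Real.rpow_nonneg hp1.le _) (Real.rpow_nonneg hε.le _),
      ← Real.rpow_mul hp1.le, ← Real.rpow_mul hε.le]
    rw [show (1/(2*p))*(2*p+1) = 1 + 1/(2*p) by field_simp]
    rw [show ((1:ℝ)/2)*(2*p+1) = p + 1/2 by ring]
    rw [Real.rpow_add hp1, Real.rpow_one, Real.rpow_add hε]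
    ring
  have eW : (ε^p + s^(p/2))^(-(1/p)-1)
      = (ε^p + s^(p/2)) * (ε^p + s^(p/2))^(-(1/p)-2) := by
    rw [show -(1/p)-1 = 1 + (-(1/p)-2) by ring, Real.rpow_add hw, Real.rpow_one]
  have e2 : s^((p-2)/2) = s * s^(p/2-2) := by
    rw [show (p-2)/2 = 1+(p/2-2) by ring, Real.rpow_add hs, Real.rpow_one]
  have eX : s^(p/2-1) = s * s^(p/2-2) := by
    rw [show p/2-1 = 1+(p/2-2) by ring, Real.rpow_add hs, Real.rpow_one]
  have eS : s^(p/2) = s * (s * s^(p/2-2)) := by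
    have h' : s * (s * s^(p/2-2)) = s^(1+(1+(p/2-2))) := by
      rw [Real.rpow_add hs, Real.rpow_add hs, Real.rpow_one]
    rw [h', show (1:ℝ)+(1+(p/2-2)) = p/2 by ring]
  unfold phi1 phi2
  rw [eR, eW, e2, eX, eS, hK]
  field_simp
  ring


theorem stmt3 (a ε : ℝ) (ha : -2 < a) (hε : 0 < ε) (U : E3 → ℝ)
    (hU : ∀ x : E3, U x = (3 + a) ^ (1 / (4 + 2 * a)) * ε ^ ((1 : ℝ) / 2) /
      (ε ^ (2 + a) + ‖x‖ ^ (2 + a)) ^ (1 / (2 + a))) :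
    (∀ x : E3, 0 < U x) ∧ ContDiffOn ℝ 2 U {(0 : E3)}ᶜ ∧
    ∀ x : E3, x ≠ 0 → -lap U x = ‖x‖ ^ a * U x ^ (5 + 2 * a) := by
  have hp : (0:ℝ) < 2 + a := by linarith
  set p : ℝ := 2 + a with hpdef
  set K : ℝ := (3 + a) ^ (1 / (4 + 2 * a)) * ε ^ ((1:ℝ)/2) with hKdef
  have h3a : (0:ℝ) < 3 + a := by linarith
  have hKpos : 0 < K := mul_pos (Real.rpow_pos_of_pos h3a _) (Real.rpow_pos_of_pos hε _)
  have hKeq : K = (p+1) ^ (1/(2*p)) * ε ^ ((1:ℝ)/2) := by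
    rw [hKdef, show (3+a : ℝ) = p + 1 by rw [hpdef]; ring,
        show (1 / (4 + 2*a) : ℝ) = 1/(2*p) by rw [hpdef]; ring_nf]
  have hUeq : U = fun y : E3 => phi0 K p ε (‖y‖^2) := by
    funext y
    rw [hU y]
    unfold phi0
    have hn2 : ((‖y‖^2 : ℝ))^(p/2) = ‖y‖^p := by
      rw [← Real.rpow_natCast ‖y‖ 2, ← Real.rpow_mul (norm_nonneg y),
        show ((2:ℕ):ℝ) * (p/2) = p by push_cast; ring]
    have hwy : 0 < ε^p + ‖y‖^p :=
      add_pos_of_pos_of_nonneg (Real.rpow_pos_of_pos hε _)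
        (Real.rpow_nonneg (norm_nonneg y) _)
    rw [hn2, Real.rpow_neg hwy.le, div_eq_mul_inv]
  refine ⟨?_, ?_, ?_⟩
  · intro x
    rw [hU x]
    have hwx : 0 < ε^p + ‖x‖^p :=
      add_pos_of_pos_of_nonneg (Real.rpow_pos_of_pos hε _)
        (Real.rpow_nonneg (norm_nonneg x) _)
    exact div_pos hKpos (Real.rpow_pos_of_pos hwx _)
  · rw [hUeq]
    intro x hx
    have hx0 : x ≠ 0 := Set.mem_compl_singleton_iff.mp hx
    have hsx : (0:ℝ) < ‖x‖^2 := by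
      have h := norm_pos_iff.mpr hx0
      positivity
    have hwx : 0 < ε^p + ((‖x‖^2 : ℝ))^(p/2) := wpos hε _ hsx.le
    apply ContDiffAt.contDiffWithinAt
    have hphi : ContDiffAt ℝ 2 (fun t : ℝ => phi0 K p ε t) (‖x‖^2) := by
      unfold phi0
      have hinner : ContDiffAt ℝ 2 (fun t : ℝ => ε^p + t^(p/2)) (‖x‖^2) :=
        contDiffAt_const.add (Real.contDiffAt_rpow_const_of_ne hsx.ne')
      have houter : ContDiffAt ℝ 2 (fun u : ℝ => u ^ (-(1/p)))
          (ε^p + ((‖x‖^2:ℝ))^(p/2)) := Real.contDiffAt_rpow_const_of_ne hwx.ne'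
      have hc := houter.comp (‖x‖^2) hinner
      exact contDiffAt_const.mul hc
    have hc2 := hphi.comp x ((contDiff_norm_sq ℝ).contDiffAt (x := x))
    exact hc2
  · intro x hx
    have hsx : (0:ℝ) < ‖x‖^2 := by
      have h := norm_pos_iff.mpr hx
      positivity
    have hUder : ∀ y : E3, y ≠ 0 →
        HasFDerivAt U ((phi1 K p ε (‖y‖^2)) • (2 • innerSL ℝ y)) y := by
      intro y hy
      rw [hUeq]
      have hsy : (0:ℝ) < ‖y‖^2 := by
        have h := norm_pos_iff.mpr hy
        positivity
      have hc := (hasDerivAt_phi0 (K := K) hε hp hsy).comp_hasFDerivAt y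
        (hasStrictFDerivAt_norm_sq y).hasFDerivAt
      exact hc
    have hkey : ∀ i : Fin 3,
        fderiv ℝ (fun y => fderiv ℝ U y (EuclideanSpace.single i (1:ℝ))) x
            (EuclideanSpace.single i (1:ℝ))
          = 2 * phi1 K p ε (‖x‖^2) + 4 * (x i * x i) * phi2 K p ε (‖x‖^2) := by
      intro i
      have hev : (fun y => fderiv ℝ U y (EuclideanSpace.single i (1:ℝ)))
          =ᶠ[nhds x] (fun y => phi1 K p ε (‖y‖^2)
            * (2 * (innerSL ℝ (EuclideanSpace.single i (1:ℝ))) y)) := by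
        filter_upwards [isOpen_compl_singleton.mem_nhds
          (Set.mem_compl_singleton_iff.mpr hx)] with y hy
        rw [(hUder y hy).fderiv]
        simp [real_inner_comm]
      have h1 : HasFDerivAt (fun y : E3 => phi1 K p ε (‖y‖^2))
          ((phi2 K p ε (‖x‖^2)) • (2 • innerSL ℝ x)) x := by
        have hc := (hasDerivAt_phi1 (K := K) (p := p) hε hsx).comp_hasFDerivAt x
          (hasStrictFDerivAt_norm_sq x).hasFDerivAt
        exact hc
      have h2 : HasFDerivAt
          (fun y : E3 => 2 * (innerSL ℝ (EuclideanSpace.single i (1:ℝ))) y)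
          (((2:ℝ)) • innerSL ℝ (EuclideanSpace.single i (1:ℝ))) x :=
        ((innerSL ℝ (EuclideanSpace.single i (1:ℝ))).hasFDerivAt).const_mul 2
      have hV := h1.mul h2
      rw [hev.fderiv_eq, show (fun y : E3 => phi1 K p ε (‖y‖^2)
          * (2 * (innerSL ℝ (EuclideanSpace.single i (1:ℝ))) y)) = ((fun y : E3 => phi1 K p ε (‖y‖^2))
          * fun y => 2 * (innerSL ℝ (EuclideanSpace.single i (1:ℝ))) y) from rfl, hV.fderiv]
      simp [EuclideanSpace.inner_single_left, EuclideanSpace.inner_single_right,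
        real_inner_comm]
      ring
    have hnorm : ‖x‖^2 = x 0 * x 0 + x 1 * x 1 + x 2 * x 2 := by
      rw [EuclideanSpace.norm_eq, Real.sq_sqrt (by positivity)]
      simp [Fin.sum_univ_three, Real.norm_eq_abs, sq_abs, sq]
    have hlap : lap U x = 4 * ‖x‖^2 * phi2 K p ε (‖x‖^2) + 6 * phi1 K p ε (‖x‖^2) := by
      unfold lap
      rw [Fin.sum_univ_three, hkey 0, hkey 1, hkey 2, hnorm]
      ring
    rw [hlap]
    have hkalg := keyalg hε hp hKeq hsx
    rw [show -(4 * ‖x‖^2 * phi2 K p ε (‖x‖^2) + 6 * phi1 K p ε (‖x‖^2))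
        = (‖x‖^2)^((p-2)/2) * (phi0 K p ε (‖x‖^2))^(2*p+1) from hkalg]
    rw [hUeq]
    rw [show (5 + 2*a : ℝ) = 2*p+1 by rw [hpdef]; ring]
    congr 1
    rw [← Real.rpow_natCast ‖x‖ 2, ← Real.rpow_mul (norm_nonneg x),
      show ((2:ℕ):ℝ) * ((p-2)/2) = a by push_cast; rw [hpdef]; ring]
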